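/- For n ≥ 2, the homomorphism λ_n : Spin(n) → SO(n) is surjective: every A ∈ SO(n) equals λ_n(x) for some x ∈ Spin(n), i.e. there exists x ∈ Spin(n) with x v x̄ = A v for all v ∈ ℝⁿ. -/

import Mathlib

/-!
The Clifford algebra `C_n` of the negative-definite quadratic form on `ℝⁿ`,
its grade involution, reversal and conjugation, and the spin group
`Spin(n) = { x | x' = x ∧ x * x̄ = 1 }`, with `λ_n(x) v = x v x̄`.
-/

open CliffordAlgebra Matrix

noncomputable section

/-- The negative-definite quadratic form `v ↦ -∑ i, (v i)²` on `ℝⁿ`. -/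
def Qneg (n : ℕ) : QuadraticForm ℝ (Fin n → ℝ) :=
  QuadraticMap.weightedSumSquares ℝ (fun _ : Fin n => (-1 : ℝ))

/-- The Clifford conjugation `x̄ = (x')*` : grade involution followed by reversal. -/
def cliffConj {n : ℕ} (x : CliffordAlgebra (Qneg n)) : CliffordAlgebra (Qneg n) :=
  reverse (involute x)

/-- The spin group `Spin(n) = { x ∈ C_n | x' = x ∧ x x̄ = 1 }`. -/
def SpinSet (n : ℕ) : Set (CliffordAlgebra (Qneg n)) :=
  {x | involute x = x ∧ x * cliffConj x = 1}

namespace SpinAux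
variable {n : ℕ}

lemma Qneg_apply (v : Fin n → ℝ) : Qneg n v = -∑ i, v i * v i := by
  simp [Qneg, QuadraticMap.weightedSumSquares_apply, Finset.sum_neg_distrib]

lemma polar_Qneg (u v : Fin n → ℝ) :
    QuadraticMap.polar (Qneg n) u v = -(2 * ∑ i, u i * v i) := by
  have h : ∑ i, (u i + v i) * (u i + v i)
      = (∑ i, u i * u i + ∑ i, v i * v i) + 2 * ∑ i, u i * v i := by
    rw [Finset.mul_sum, ← Finset.sum_add_distrib, ← Finset.sum_add_distrib]
    exact Finset.sum_congr rfl fun i _ => by ring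
  simp only [QuadraticMap.polar, Qneg_apply, Pi.add_apply, h]; ring

lemma conj_ι (v : Fin n → ℝ) : cliffConj (ι (Qneg n) v) = - ι (Qneg n) v := by
  simp [cliffConj]

lemma conj_mul (x y : CliffordAlgebra (Qneg n)) :
    cliffConj (x * y) = cliffConj y * cliffConj x := by
  simp [cliffConj, reverse.map_mul]

lemma conj_one : cliffConj (1 : CliffordAlgebra (Qneg n)) = 1 := by
  simp [cliffConj]

/-- The reflection of `v` in the hyperplane orthogonal to a unit vector `u`. -/
def refl (u v : Fin n → ℝ) : Fin n → ℝ := v - (2 * ∑ i, u i * v i) • u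

lemma sandwich (u v : Fin n → ℝ) (hu : ∑ i, u i * u i = 1) :
    ι (Qneg n) u * ι (Qneg n) v * ι (Qneg n) u = ι (Qneg n) (refl u v) := by
  have hswap := ι_mul_ι_add_swap (Q := Qneg n) u v
  have h1 : ι (Qneg n) u * ι (Qneg n) v
      = algebraMap ℝ _ (QuadraticMap.polar (Qneg n) u v) - ι (Qneg n) v * ι (Qneg n) u := by
    rw [← hswap]; abel
  rw [h1, sub_mul, mul_assoc, ι_sq_scalar, Qneg_apply, hu, polar_Qneg]
  simp only [_root_.map_neg, _root_.map_one, mul_neg_one, sub_neg_eq_add, neg_mul,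
    ← Algebra.smul_def, refl.eq_1, map_sub, _root_.map_smul]
  abel

lemma neg_one_pow_comm (k : ℕ) (x : CliffordAlgebra (Qneg n)) :
    (-1 : CliffordAlgebra (Qneg n)) ^ k * x = x * (-1) ^ k :=
  ((Commute.neg_one_left x).pow_left k).eq

lemma prod_rev (L : List (Fin n → ℝ)) (hL : ∀ u ∈ L, ∑ i, u i * u i = 1) :
    (L.map (ι (Qneg n))).prod * (L.reverse.map (ι (Qneg n))).prod = (-1) ^ L.length := by
  induction L with
  | nil => simp
  | cons u t ih =>
    have ht : ∀ w ∈ t, ∑ i, w i * w i = 1 := fun w hw => hL w (List.mem_cons_of_mem _ hw)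
    have hu2 : ι (Qneg n) u * ι (Qneg n) u = -1 := by
      rw [ι_sq_scalar, Qneg_apply, hL u (List.mem_cons_self), map_neg, _root_.map_one]
    simp only [List.map_cons, List.prod_cons, List.reverse_cons, List.map_append,
      List.map_nil, List.prod_append, List.prod_cons, List.prod_nil, mul_one,
      List.length_cons]
    rw [mul_assoc, ← mul_assoc (List.prod _), ih ht, neg_one_pow_comm, ← mul_assoc, hu2,
      pow_succ]
    exact (neg_one_pow_comm t.length (-1)).symm

lemma sandwich_list (L : List (Fin n → ℝ)) (hL : ∀ u ∈ L, ∑ i, u i * u i = 1)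
    (v : Fin n → ℝ) :
    (L.map (ι (Qneg n))).prod * ι (Qneg n) v * (L.reverse.map (ι (Qneg n))).prod
      = ι (Qneg n) (L.foldr refl v) := by
  induction L with
  | nil => simp
  | cons u t ih =>
    have ht : ∀ w ∈ t, ∑ i, w i * w i = 1 := fun w hw => hL w (List.mem_cons_of_mem _ hw)
    simp only [List.map_cons, List.prod_cons, List.reverse_cons, List.map_append,
      List.map_nil, List.prod_append, List.prod_cons, List.prod_nil, mul_one,
      List.foldr_cons]
    calc ι (Qneg n) u * (t.map (ι (Qneg n))).prod * ι (Qneg n) v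
          * ((t.reverse.map (ι (Qneg n))).prod * ι (Qneg n) u)
        = ι (Qneg n) u * ((t.map (ι (Qneg n))).prod * ι (Qneg n) v
            * (t.reverse.map (ι (Qneg n))).prod) * ι (Qneg n) u := by
          simp only [mul_assoc]
      _ = ι (Qneg n) u * ι (Qneg n) (t.foldr refl v) * ι (Qneg n) u := by rw [ih ht]
      _ = ι (Qneg n) (refl u (t.foldr refl v)) :=
          sandwich u _ (hL u (List.mem_cons_self))

lemma conj_prod (L : List (Fin n → ℝ)) :
    cliffConj ((L.map (ι (Qneg n))).prod)
      = (-1) ^ L.length * (L.reverse.map (ι (Qneg n))).prod := by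
  induction L with
  | nil => simp [conj_one]
  | cons u t ih =>
    simp only [List.map_cons, List.prod_cons, List.reverse_cons, List.map_append,
      List.map_nil, List.prod_append, List.prod_cons, List.prod_nil, mul_one,
      List.length_cons]
    rw [conj_mul, conj_ι, ih, pow_succ', mul_neg, mul_assoc, neg_one_mul, neg_mul]

lemma involute_prod (L : List (Fin n → ℝ)) :
    involute ((L.map (ι (Qneg n))).prod) = (-1) ^ L.length * (L.map (ι (Qneg n))).prod := by
  induction L with
  | nil => simp
  | cons u t ih =>
    simp only [List.map_cons, List.prod_cons, List.length_cons]
    rw [_root_.map_mul, involute_ι, ih, pow_succ', neg_mul, ← mul_assoc, ← neg_one_pow_comm,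
      mul_assoc, neg_one_mul, neg_mul]

section Geometry

local notation "F" => EuclideanSpace ℝ (Fin n)

lemma inner_eq_sum (x y : EuclideanSpace ℝ (Fin n)) :
    (inner ℝ x y : ℝ) = ∑ i, x i * y i := by
  simp [PiLp.inner_apply, RCLike.inner_apply, conj_trivial, mul_comm]

lemma refl_eq_reflection (u : EuclideanSpace ℝ (Fin n)) (hu : ‖u‖ = 1)
    (v : EuclideanSpace ℝ (Fin n)) :
    Submodule.reflection (ℝ ∙ u)ᗮ v = refl u v := by
  show (Submodule.reflection (ℝ ∙ u)ᗮ v).ofLp = (v - (2 * ∑ i, u i * v i) • u).ofLp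
  congr 1
  rw [Submodule.reflection_orthogonal_apply, Submodule.reflection_singleton_apply, hu, inner_eq_sum]
  rw [neg_sub]
  norm_num
  rw [two_smul, two_mul, add_smul]

lemma reflection_zero_eq_one :
    Submodule.reflection (ℝ ∙ (0 : EuclideanSpace ℝ (Fin n)))ᗮ = 1 := by
  refine LinearIsometryEquiv.ext fun v => ?_
  have hv : v ∈ (ℝ ∙ (0 : EuclideanSpace ℝ (Fin n)))ᗮ := by
    rw [Submodule.span_zero_singleton]
    simp
  simpa using Submodule.reflection_mem_subspace_eq_self hv

lemma reflection_smul_eq (u : EuclideanSpace ℝ (Fin n)) (c : ℝ) (hc : c ≠ 0) :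
    Submodule.reflection (ℝ ∙ (c • u))ᗮ = Submodule.reflection (ℝ ∙ u)ᗮ := by
  exact congrArg (fun K : Submodule ℝ (EuclideanSpace ℝ (Fin n)) => Submodule.reflection Kᗮ)
    (Submodule.span_singleton_smul_eq (IsUnit.mk0 c hc) u)

/-- the determinant monoid hom on linear isometry equivalences -/
def detHom : (EuclideanSpace ℝ (Fin n) ≃ₗᵢ[ℝ] EuclideanSpace ℝ (Fin n)) →* ℝ where
  toFun e := LinearMap.det (e.toLinearEquiv : F →ₗ[ℝ] F)
  map_one' := by
    show LinearMap.det ((1 : F ≃ₗᵢ[ℝ] F).toLinearEquiv : F →ₗ[ℝ] F) = 1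
    have : ((1 : F ≃ₗᵢ[ℝ] F).toLinearEquiv : F →ₗ[ℝ] F) = LinearMap.id := by
      ext v; rfl
    rw [this, LinearMap.det_id]
  map_mul' e f := by
    show LinearMap.det ((e * f).toLinearEquiv : F →ₗ[ℝ] F) = _ * _
    have : ((e * f).toLinearEquiv : F →ₗ[ℝ] F)
        = ((e.toLinearEquiv : F →ₗ[ℝ] F).comp (f.toLinearEquiv : F →ₗ[ℝ] F)) := by
      ext v; rfl
    rw [this, LinearMap.det_comp]

lemma detHom_reflection (u : EuclideanSpace ℝ (Fin n)) (hu : u ≠ 0) :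
    detHom (n := n) (Submodule.reflection (ℝ ∙ u)ᗮ) = -1 := by
  show LinearMap.det _ = _
  have h2 : ((ℝ ∙ u)ᗮ)ᗮ = (ℝ ∙ u) := Submodule.orthogonal_orthogonal _
  have := Submodule.det_reflection (𝕜 := ℝ) (E := EuclideanSpace ℝ (Fin n)) ((ℝ ∙ u)ᗮ)
  rw [h2, finrank_span_singleton hu, pow_one] at this
  exact this

end Geometry

section Lists

lemma prod_reflection_apply (L : List (EuclideanSpace ℝ (Fin n)))
    (v : EuclideanSpace ℝ (Fin n)) :
    ((L.map fun u => Submodule.reflection (ℝ ∙ u)ᗮ).prod) v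
      = L.foldr (fun u w => Submodule.reflection (ℝ ∙ u)ᗮ w) v := by
  induction L generalizing v with
  | nil => rfl
  | cons u t ih =>
    simp only [List.map_cons, List.prod_cons, List.foldr_cons]
    rw [LinearIsometryEquiv.coe_mul, Function.comp_apply, ih]

lemma foldr_refl_eq (L : List (EuclideanSpace ℝ (Fin n))) (hL : ∀ u ∈ L, ‖u‖ = 1)
    (v : EuclideanSpace ℝ (Fin n)) :
    (L.foldr (fun u w => Submodule.reflection (ℝ ∙ u)ᗮ w) v).ofLp
      = (L.map WithLp.ofLp).foldr refl v.ofLp := by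
  induction L with
  | nil => rfl
  | cons u t ih =>
    simp only [List.foldr_cons, List.map_cons]
    rw [← ih (fun w hw => hL w (List.mem_cons_of_mem _ hw)),
      ← refl_eq_reflection u (hL u (List.mem_cons_self))]

lemma exists_unit_list (φ : EuclideanSpace ℝ (Fin n) ≃ₗᵢ[ℝ]
      EuclideanSpace ℝ (Fin n)) (hdet : detHom (n := n) φ = 1) :
    ∃ L : List (EuclideanSpace ℝ (Fin n)), (∀ u ∈ L, ‖u‖ = 1) ∧ Even L.length ∧
      (L.map fun u => Submodule.reflection (ℝ ∙ u)ᗮ).prod = φ := by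
  obtain ⟨l, -, hl⟩ := φ.reflections_generate_dim
  have key : ∀ m : List (EuclideanSpace ℝ (Fin n)),
      ∃ L : List (EuclideanSpace ℝ (Fin n)), (∀ u ∈ L, ‖u‖ = 1) ∧
        (L.map fun u => Submodule.reflection (ℝ ∙ u)ᗮ).prod = (m.map fun u => Submodule.reflection (ℝ ∙ u)ᗮ).prod ∧
        detHom (n := n) ((L.map fun u => Submodule.reflection (ℝ ∙ u)ᗮ).prod) = (-1) ^ L.length := by
    intro m
    induction m with
    | nil =>
      refine ⟨[], by simp, rfl, ?_⟩
      simp only [List.map_nil, List.prod_nil, List.length_nil, pow_zero]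
      exact map_one (detHom (n := n))
    | cons u t ih =>
      obtain ⟨L, hL1, hL2, hL3⟩ := ih
      by_cases h : u = 0
      · subst h
        refine ⟨L, hL1, ?_, hL3⟩
        rw [hL2, List.map_cons, List.prod_cons, reflection_zero_eq_one, one_mul]
      · have hnorm : ‖(‖u‖⁻¹ • u : EuclideanSpace ℝ (Fin n))‖ = 1 := by
          rw [norm_smul, norm_inv, norm_norm, inv_mul_cancel₀ (norm_ne_zero_iff.mpr h)]
        refine ⟨(‖u‖⁻¹ • u) :: L, ?_, ?_, ?_⟩
        · intro w hw
          rcases List.mem_cons.mp hw with h1 | h1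
          · rw [h1]; exact hnorm
          · exact hL1 w h1
        · rw [List.map_cons, List.prod_cons, List.map_cons, List.prod_cons, hL2,
            reflection_smul_eq u (‖u‖⁻¹) (inv_ne_zero (norm_ne_zero_iff.mpr h))]
        · have hne : (‖u‖⁻¹ • u : EuclideanSpace ℝ (Fin n)) ≠ 0 := by
            intro h0
            rw [h0, norm_zero] at hnorm
            norm_num at hnorm
          rw [List.map_cons, List.prod_cons, _root_.map_mul, detHom_reflection _ hne, hL3,
            List.length_cons, pow_succ]
          ring
  obtain ⟨L, hL1, hL2, hL3⟩ := key l
  have hprod : (L.map fun u => Submodule.reflection (ℝ ∙ u)ᗮ).prod = φ := by rw [hL2]; exact hl.symm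
  have hpow : ((-1 : ℝ)) ^ L.length = 1 := by
    rw [← hL3, hprod, hdet]
  have heven : Even L.length := by
    rcases Nat.even_or_odd L.length with he | ho
    · exact he
    · rw [ho.neg_one_pow] at hpow; norm_num at hpow
  exact ⟨L, hL1, heven, hprod⟩

end Lists

lemma norm_one_sum_sq {u : EuclideanSpace ℝ (Fin n)} (hu : ‖u‖ = 1) :
    ∑ i, u i * u i = 1 := by
  have h := real_inner_self_eq_norm_sq u
  rw [inner_eq_sum, hu] at h
  simpa using h

end SpinAux


open SpinAux in
/-- for `n ≥ 2`, `λ_n : Spin(n) → SO(n)` is surjective: every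
`A ∈ SO(n)` (i.e. `Aᵀ A = 1`, `det A = 1`) is of the form `λ_n(x)` for some
`x ∈ Spin(n)`, i.e. `x v x̄ = A v` for all `v ∈ ℝⁿ`. -/
theorem lambda_surjective (n : ℕ) (hn : 2 ≤ n) (A : Matrix (Fin n) (Fin n) ℝ)
    (hA : Aᵀ * A = 1) (hdet : A.det = 1) :
    ∃ x ∈ SpinSet n, ∀ v : Fin n → ℝ,
      x * ι (Qneg n) v * cliffConj x = ι (Qneg n) (A *ᵥ v) := by
  have hAAt : A * Aᵀ = 1 := mul_eq_one_comm.mp hA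
  have hcomp : ∀ M N : Matrix (Fin n) (Fin n) ℝ,
      (Matrix.toEuclideanLin M).comp (Matrix.toEuclideanLin N)
        = Matrix.toEuclideanLin (M * N) := by
    intro M N
    apply LinearMap.ext; intro v
    show Matrix.toEuclideanLin M (Matrix.toEuclideanLin N v) = _
    rw [Matrix.toEuclideanLin_apply, Matrix.toEuclideanLin_apply, Matrix.toEuclideanLin_apply]
    simp [Matrix.mulVec_mulVec]
  have hone : Matrix.toEuclideanLin (1 : Matrix (Fin n) (Fin n) ℝ) = LinearMap.id := by
    apply LinearMap.ext; intro v
    rw [Matrix.toEuclideanLin_apply]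
    simp
  let e : EuclideanSpace ℝ (Fin n) ≃ₗ[ℝ] EuclideanSpace ℝ (Fin n) :=
    LinearEquiv.ofLinear (Matrix.toEuclideanLin A) (Matrix.toEuclideanLin Aᵀ)
      (by rw [hcomp, hAAt, hone]) (by rw [hcomp, hA, hone])
  have hinner : ∀ x y : EuclideanSpace ℝ (Fin n), (inner ℝ (e x) (e y) : ℝ) = inner ℝ x y := by
    intro x y
    rw [inner_eq_sum, inner_eq_sum]
    show dotProduct (A *ᵥ x) (A *ᵥ y) = dotProduct x y
    rw [Matrix.dotProduct_mulVec, ← Matrix.mulVec_transpose, Matrix.mulVec_mulVec, hA,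
      Matrix.one_mulVec]
  let φ : EuclideanSpace ℝ (Fin n) ≃ₗᵢ[ℝ] EuclideanSpace ℝ (Fin n) :=
    e.isometryOfInner hinner
  have hdetφ : detHom (n := n) φ = 1 := by
    show LinearMap.det ((φ.toLinearEquiv : EuclideanSpace ℝ (Fin n) →ₗ[ℝ]
      EuclideanSpace ℝ (Fin n))) = 1
    have h1 : (φ.toLinearEquiv : EuclideanSpace ℝ (Fin n) →ₗ[ℝ] EuclideanSpace ℝ (Fin n))
        = Matrix.toLin (PiLp.basisFun 2 ℝ (Fin n)) (PiLp.basisFun 2 ℝ (Fin n)) A := rfl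
    rw [h1, LinearMap.det_toLin, hdet]
  obtain ⟨L, hL1, hLeven, hLprod⟩ := exists_unit_list φ hdetφ
  have hLsum : ∀ u ∈ L.map WithLp.ofLp, ∑ i, u i * u i = 1 := by
    intro u hu
    obtain ⟨w, hw, rfl⟩ := List.mem_map.mp hu
    exact norm_one_sum_sq (hL1 w hw)
  have hLeven' : Even (L.map WithLp.ofLp).length := by simpa using hLeven
  refine ⟨((L.map WithLp.ofLp).map (ι (Qneg n))).prod, ⟨?_, ?_⟩, ?_⟩
  · rw [involute_prod, Even.neg_one_pow hLeven', one_mul]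
  · rw [conj_prod, Even.neg_one_pow hLeven', one_mul, prod_rev _ hLsum,
      Even.neg_one_pow hLeven']
  · intro v
    rw [conj_prod, Even.neg_one_pow hLeven', one_mul, sandwich_list _ hLsum v]
    refine congrArg (ι (Qneg n)) ?_
    have h6 : (L.map WithLp.ofLp).foldr refl v = (φ (WithLp.toLp 2 v)).ofLp := by
      show List.foldr refl (WithLp.toLp 2 v).ofLp (L.map WithLp.ofLp) = _
      rw [← foldr_refl_eq L hL1 (WithLp.toLp 2 v), ← prod_reflection_apply, hLprod]
    have h7 : (φ (WithLp.toLp 2 v)).ofLp = A *ᵥ v := rfl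
    rw [h6]  -- ?
    exact h7
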